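/- Let R be an object unital G-graded ring, M and N graded unital left R-modules with N a graded submodule of M. Then N is a direct summand of M in the category of graded unital modules (with graded complement) if and only if the underlying module U(N) is a direct summand of U(M) as ungraded R-modules. -/

import Mathlib

open CategoryTheory

/-- The arrows of a groupoid, bundled with their endpoints. -/
abbrev GArrow (G : Type*) [Groupoid G] := Σ a b : G, a ⟶ b

namespace GArrow

variable {G : Type*} [Groupoid G]

/-- The unit arrow at an object. -/
def unit (a : G) : GArrow G := ⟨a, a, 𝟙 a⟩

/-- The inverse arrow `σ⁻¹`. -/
def ginv (σ : GArrow G) : GArrow G := ⟨σ.2.1, σ.1, Groupoid.inv σ.2.2⟩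

/-- `Composable σ τ` means `d(σ) = r(τ)`, i.e. the product `στ` is defined. -/
def Composable (σ τ : GArrow G) : Prop := σ.1 = τ.2.1

/-- The product `στ` when `d(σ) = r(τ)`. -/
def comp (σ τ : GArrow G) (h : Composable σ τ) : GArrow G :=
  ⟨τ.1, σ.2.1, τ.2.2 ≫ eqToHom h.symm ≫ σ.2.2⟩

/-- The unit space `G₀`, as a set of arrows. -/
def GUnits (G : Type*) [Groupoid G] : Set (GArrow G) := Set.range unit

/-- The product of two sets of arrows: `Σ * Σ' = { στ : σ ∈ Σ, τ ∈ Σ', d(σ) = r(τ) }`. -/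
def setMul (A B : Set (GArrow G)) : Set (GArrow G) :=
  {ρ | ∃ σ ∈ A, ∃ τ ∈ B, ∃ h : Composable σ τ, ρ = comp σ τ h}

end GArrow

/-- An object unital `G`-grading on an associative, not necessarily unital, ring `R`:
`R = ⊕_{σ ∈ G} R_σ`, `R_σ R_τ ⊆ R_{στ}` for composable pairs, `R_σ R_τ = 0` otherwise,
each `R_e` (`e ∈ G₀`) is unital with identity `u e`, and
`1_{R_{r(σ)}} r = r 1_{R_{d(σ)}} = r` for every `r ∈ R_σ`. -/
structure OUGrading (G : Type*) [Groupoid G] (R : Type*) [NonUnitalRing R] where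
  component : GArrow G → AddSubgroup R
  sup_eq_top : (⨆ σ : GArrow G, component σ) = ⊤
  indep : iSupIndep component
  mul_mem : ∀ (σ τ : GArrow G) (h : GArrow.Composable σ τ), ∀ r ∈ component σ,
    ∀ s ∈ component τ, r * s ∈ component (GArrow.comp σ τ h)
  mul_eq_zero : ∀ (σ τ : GArrow G), ¬ GArrow.Composable σ τ → ∀ r ∈ component σ,
    ∀ s ∈ component τ, r * s = 0
  /-- The identity of the unital ring `R_e`, for each object (unit) `e`. -/
  u : G → R
  u_mem : ∀ a : G, u a ∈ component (GArrow.unit a)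
  u_left : ∀ σ : GArrow G, ∀ r ∈ component σ, u σ.2.1 * r = r
  u_right : ∀ σ : GArrow G, ∀ r ∈ component σ, r * u σ.1 = r

/-- The axioms of a left module over a not necessarily unital ring. -/
structure NUModule (R M : Type*) [NonUnitalRing R] [AddCommGroup M] [SMul R M] : Prop where
  smul_add : ∀ (r : R) (m n : M), r • (m + n) = r • m + r • n
  add_smul : ∀ (r s : R) (m : M), (r + s) • m = r • m + s • m
  mul_smul : ∀ (r s : R) (m : M), (r * s) • m = r • (s • m)

/-- A `G`-graded left module over a ring `R` with object unital `G`-grading `gr`. -/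
structure GrModule {G : Type*} [Groupoid G] {R : Type*} [NonUnitalRing R]
    (gr : OUGrading G R) (M : Type*) [AddCommGroup M] [SMul R M] where
  smul_add : ∀ (r : R) (m n : M), r • (m + n) = r • m + r • n
  add_smul : ∀ (r s : R) (m : M), (r + s) • m = r • m + s • m
  mul_smul : ∀ (r s : R) (m : M), (r * s) • m = r • (s • m)
  component : GArrow G → AddSubgroup M
  sup_eq_top : (⨆ σ : GArrow G, component σ) = ⊤
  indep : iSupIndep component
  smul_mem : ∀ (σ τ : GArrow G) (h : GArrow.Composable σ τ), ∀ r ∈ gr.component σ,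
    ∀ m ∈ component τ, r • m ∈ component (GArrow.comp σ τ h)
  smul_eq_zero : ∀ (σ τ : GArrow G), ¬ GArrow.Composable σ τ → ∀ r ∈ gr.component σ,
    ∀ m ∈ component τ, r • m = 0

/-- A graded module is graded unital if `1_{R_{r(σ)}} • m = m` for all homogeneous `m`
of degree `σ`. -/
def GrModule.IsUnital {G : Type*} [Groupoid G] {R : Type*} [NonUnitalRing R]
    {gr : OUGrading G R} {M : Type*} [AddCommGroup M] [SMul R M]
    (gm : GrModule gr M) : Prop :=
  ∀ σ : GArrow G, ∀ m ∈ gm.component σ, gr.u σ.2.1 • m = m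

/-- A graded homomorphism between graded modules with homogeneous components `cM`, `cN`. -/
def IsGrHom {G : Type*} [Groupoid G] {R : Type*} [NonUnitalRing R]
    {M N : Type*} [AddCommGroup M] [AddCommGroup N] [SMul R M] [SMul R N]
    (cM : GArrow G → AddSubgroup M) (cN : GArrow G → AddSubgroup N) (f : M → N) : Prop :=
  (∀ x y : M, f (x + y) = f x + f y) ∧ (∀ (r : R) (x : M), f (r • x) = r • f x) ∧
    (∀ σ : GArrow G, ∀ x ∈ cM σ, f x ∈ cN σ)

/-- A graded submodule: an additive subgroup closed under the `R`-action which is the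
sum of its homogeneous components. -/
def IsGrSubmodule {G : Type*} [Groupoid G] {R : Type*} [NonUnitalRing R]
    {gr : OUGrading G R} {M : Type*} [AddCommGroup M] [SMul R M]
    (gm : GrModule gr M) (N : AddSubgroup M) : Prop :=
  (∀ (r : R), ∀ m ∈ N, r • m ∈ N) ∧ N = ⨆ σ : GArrow G, (N ⊓ gm.component σ)

open Classical in
/-- The homogeneous component of degree `τ` of the `σ'`-suspension `R(σ')`:
`R(σ')_τ = R_{τσ'}` if `(τ, σ')` is composable and `{0}` otherwise. -/
noncomputable def suspComponent {G : Type*} [Groupoid G] {R : Type*} [NonUnitalRing R]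
    (gr : OUGrading G R) (σ' τ : GArrow G) : AddSubgroup R :=
  if h : GArrow.Composable τ σ' then gr.component (GArrow.comp τ σ' h) else ⊥

/-- The `σ'`-suspension `R(σ') = ⊕_τ R(σ')_τ` of `R`, as an additive subgroup of `R`. -/
noncomputable def suspension {G : Type*} [Groupoid G] {R : Type*} [NonUnitalRing R]
    (gr : OUGrading G R) (σ' : GArrow G) : AddSubgroup R :=
  ⨆ τ : GArrow G, suspComponent gr σ' τ

/-- A graded homomorphism from a graded left ideal `S` of `R` (with homogeneous
components `cS`) to a graded module with components `cN`. -/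
def IsGrHomOn {G : Type*} [Groupoid G] {R N : Type*} [NonUnitalRing R]
    [AddCommGroup N] [SMul R N] {S : AddSubgroup R}
    (cS : GArrow G → AddSubgroup R) (cN : GArrow G → AddSubgroup N) (f : ↥S → N) : Prop :=
  (∀ x y : ↥S, f (x + y) = f x + f y) ∧
  (∀ (r : R) (x y : ↥S), (y : R) = r * (x : R) → f y = r • f x) ∧
  (∀ τ : GArrow G, ∀ x : ↥S, (x : R) ∈ cS τ → f x ∈ cN τ)

/-- A graded module is free by suspension if it is the internal direct sum of graded
submodules, each gradedly isomorphic to a suspension `R(σᵢ)` of `R`. -/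
noncomputable def FreeBySuspension {G : Type*} [Groupoid G] {R : Type*} [NonUnitalRing R]
    {gr : OUGrading G R} {M : Type*} [AddCommGroup M] [SMul R M]
    (gm : GrModule gr M) : Prop :=
  ∃ (ι : Type*) (σs : ι → GArrow G) (f : ∀ i : ι, ↥(suspension gr (σs i)) → M),
    (∀ i : ι, IsGrHomOn (suspComponent gr (σs i)) gm.component (f i)) ∧
    (∀ i : ι, Function.Injective (f i)) ∧
    iSupIndep (fun i : ι => AddSubgroup.closure (Set.range (f i))) ∧
    (⨆ i : ι, AddSubgroup.closure (Set.range (f i))) = ⊤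

/-- The set of graded homomorphisms `R → N` of degree `σ`. -/
def HomDeg {G : Type*} [Groupoid G] {R N : Type*} [NonUnitalRing R]
    [AddCommGroup N] [SMul R N] (gr : OUGrading G R)
    (cN : GArrow G → AddSubgroup N) (σ : GArrow G) : Set (R → N) :=
  {f | (∀ x y : R, f (x + y) = f x + f y) ∧ (∀ r x : R, f (r * x) = r • f x) ∧
    (∀ (τ : GArrow G) (h : GArrow.Composable τ σ), ∀ x ∈ gr.component τ,
        f x ∈ cN (GArrow.comp τ σ h)) ∧
    (∀ τ : GArrow G, ¬ GArrow.Composable τ σ → ∀ x ∈ gr.component τ, f x = 0)}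

/-- `HOM_R(R, N) = ⊕_σ HOM_R(R, N)_σ`, the additive group generated by the graded
homomorphisms of some degree. -/
def HOM {G : Type*} [Groupoid G] {R N : Type*} [NonUnitalRing R]
    [AddCommGroup N] [SMul R N] (gr : OUGrading G R)
    (cN : GArrow G → AddSubgroup N) : AddSubgroup (R → N) :=
  AddSubgroup.closure (⋃ σ : GArrow G, HomDeg gr cN σ)

/-- The left `R`-action `(r · f)(x) = f(x r)` on maps `R → N`. -/
def rAct {R N : Type*} [NonUnitalRing R] (r : R) (f : R → N) : R → N :=
  fun x => f (x * r)

/-- `R · HOM_R(R, N)`, the unitary part of `HOM_R(R, N)` under the action `rAct`. -/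
def RHOM {G : Type*} [Groupoid G] {R N : Type*} [NonUnitalRing R]
    [AddCommGroup N] [SMul R N] (gr : OUGrading G R)
    (cN : GArrow G → AddSubgroup N) : AddSubgroup (R → N) :=
  AddSubgroup.closure {g | ∃ (r : R), ∃ f ∈ HOM gr cN, g = rAct r f}

/-- A bundled graded unital left `R`-module. -/
structure GrUMod {G : Type*} [Groupoid G] {R : Type*} [NonUnitalRing R]
    (gr : OUGrading G R) where
  carrier : Type*
  [acg : AddCommGroup carrier]
  [sm : SMul R carrier]
  str : GrModule gr carrier
  unital : str.IsUnital

attribute [instance] GrUMod.acg GrUMod.sm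


private lemma comp_inj_right' {G : Type*} [Groupoid G] (ρ : GArrow G) {σ σ' : GArrow G}
    (h : GArrow.Composable ρ σ) (h' : GArrow.Composable ρ σ')
    (he : GArrow.comp ρ σ h = GArrow.comp ρ σ' h') : σ = σ' := by
  obtain ⟨c, d, g⟩ := ρ
  obtain ⟨a, b, f⟩ := σ
  obtain ⟨a', b', f'⟩ := σ'
  obtain rfl : c = b := h
  obtain rfl : c = b' := h'
  simp only [GArrow.comp, eqToHom_refl, Category.id_comp] at he
  rw [Sigma.ext_iff] at he
  obtain ⟨rfl, he⟩ := he
  rw [heq_iff_eq, Sigma.ext_iff] at he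
  obtain ⟨-, he⟩ := he
  rw [heq_iff_eq, cancel_mono g] at he
  rw [he]

/-- A graded submodule `N` of a graded unital module `M` is a direct
summand with a graded complement iff `U(N)` is a direct summand of `U(M)` as ungraded
`R`-modules. -/
theorem stmt13 {G R M : Type*} [Groupoid G] [NonUnitalRing R] [AddCommGroup M] [SMul R M]
    (gr : OUGrading G R) (gm : GrModule gr M) (hu : gm.IsUnital)
    (N : AddSubgroup M) (hN : IsGrSubmodule gm N) :
    (∃ C : AddSubgroup M, IsGrSubmodule gm C ∧ N ⊓ C = ⊥ ∧ N ⊔ C = ⊤) ↔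
      (∃ C : AddSubgroup M, (∀ (r : R), ∀ m ∈ C, r • m ∈ C) ∧ N ⊓ C = ⊥ ∧ N ⊔ C = ⊤) := by
  constructor
  · rintro ⟨C, hC, h1, h2⟩
    exact ⟨C, hC.1, h1, h2⟩
  rintro ⟨C, hCsmul, hNC, hNCtop⟩
  classical
  -- basic smul facts
  have smul_zero' : ∀ r : R, r • (0 : M) = 0 := by
    intro r
    have h := gm.smul_add r 0 0
    rw [add_zero] at h
    exact left_eq_add.mp h
  have zero_smul' : ∀ m : M, (0 : R) • m = 0 := by
    intro m
    have h := gm.add_smul 0 0 m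
    rw [add_zero] at h
    exact left_eq_add.mp h
  -- internal direct sum machinery over ℤ
  set A : GArrow G → Submodule ℤ M := fun σ => AddSubgroup.toIntSubmodule (gm.component σ)
    with hAdef
  have hmemA : ∀ σ (x : M), x ∈ A σ ↔ x ∈ gm.component σ := fun σ x => Iff.rfl
  have hindep : iSupIndep A := iSupIndep.map_orderIso AddSubgroup.toIntSubmodule gm.indep
  have hsup : iSup A = ⊤ := by
    rw [eq_top_iff]
    intro x _
    have hx : x ∈ ⨆ σ, gm.component σ := by rw [gm.sup_eq_top]; trivial
    refine AddSubgroup.iSup_induction _ hx (C := fun x => x ∈ iSup A) ?_ ?_ ?_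
    · exact fun σ y hy => Submodule.mem_iSup_of_mem σ hy
    · exact zero_mem _
    · exact fun a b ha hb => add_mem ha hb
  have hint : DirectSum.IsInternal A :=
    DirectSum.isInternal_submodule_of_iSupIndep_of_iSup_eq_top hindep hsup
  set e : (DirectSum (GArrow G) fun σ => A σ) ≃ₗ[ℤ] M :=
    LinearEquiv.ofBijective (DirectSum.coeLinearMap A) hint with hedef
  have he_apply : ∀ x, e x = DirectSum.coeLinearMap A x := fun x => rfl
  -- the homogeneous projections
  set pi : GArrow G → M → M := fun σ m => ((e.symm m) σ : M) with hpidef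
  have hpi_mem : ∀ σ m, pi σ m ∈ gm.component σ := fun σ m => ((e.symm m) σ).2
  have he_of : ∀ σ (m : M) (hm : m ∈ gm.component σ),
      e.symm m = DirectSum.of (fun σ => A σ) σ ⟨m, hm⟩ := by
    intro σ m hm
    rw [LinearEquiv.symm_apply_eq, he_apply]
    exact (DirectSum.coeLinearMap_of A σ ⟨m, hm⟩).symm
  have hpi_same : ∀ σ (m : M), m ∈ gm.component σ → pi σ m = m := by
    intro σ m hm
    rw [hpidef]
    simp only [he_of σ m hm, DirectSum.of_eq_same]
  have hpi_ne : ∀ σ τ (m : M), m ∈ gm.component σ → τ ≠ σ → pi τ m = 0 := by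
    intro σ τ m hm hne
    rw [hpidef]
    simp only [he_of σ m hm, DirectSum.of_eq_of_ne σ τ _ hne]
    rfl
  have hpi_add : ∀ σ (x y : M), pi σ (x + y) = pi σ x + pi σ y := by
    intro σ x y
    rw [hpidef]
    simp only [map_add, DirectSum.add_apply, Submodule.coe_add]
  have hpi_zero : ∀ σ, pi σ (0 : M) = 0 := by
    intro σ
    rw [hpidef]
    simp
  have hsum : ∀ m : M, ∑ τ ∈ DFinsupp.support (e.symm m), pi τ m = m := by
    intro m
    conv_rhs => rw [← e.apply_symm_apply m, ← DirectSum.sum_support_of (e.symm m)]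
    rw [map_sum]
    refine Finset.sum_congr rfl fun τ _ => ?_
    rw [he_apply, DirectSum.coeLinearMap_of]
  -- the ungraded projection onto N along C
  have hcompl : IsCompl (AddSubgroup.toIntSubmodule N) (AddSubgroup.toIntSubmodule C) := by
    constructor
    · rw [disjoint_iff, eq_bot_iff]
      rintro x ⟨hx1, hx2⟩
      have : x ∈ N ⊓ C := ⟨hx1, hx2⟩
      rw [hNC] at this
      simpa using this
    · rw [codisjoint_iff, eq_top_iff]
      intro x _
      have : x ∈ N ⊔ C := by rw [hNCtop]; trivial
      obtain ⟨y, hy, z, hz, hyz⟩ := AddSubgroup.mem_sup.mp this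
      exact Submodule.mem_sup.mpr ⟨y, hy, z, hz, hyz⟩
  set p0 : M →ₗ[ℤ] (AddSubgroup.toIntSubmodule N) :=
    (AddSubgroup.toIntSubmodule N).linearProjOfIsCompl _ hcompl with hp0def
  set piN : M → M := fun m => ((p0 m : M)) with hpiNdef
  have hpiN_mem : ∀ m, piN m ∈ N := fun m => (p0 m).2
  have hpiN_N : ∀ m ∈ N, piN m = m := by
    intro m hm
    have := Submodule.linearProjOfIsCompl_apply_left hcompl ⟨m, hm⟩
    rw [hpiNdef]
    simp only [hp0def]
    exact congrArg Subtype.val this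
  have hpiN_C : ∀ m ∈ C, piN m = 0 := by
    intro m hm
    have := Submodule.linearProjOfIsCompl_apply_right hcompl ⟨m, hm⟩
    rw [hpiNdef]
    simp only [hp0def]
    exact congrArg Subtype.val this
  have hpiN_add : ∀ x y, piN (x + y) = piN x + piN y := by
    intro x y
    rw [hpiNdef]
    simp only [map_add, Submodule.coe_add]
  have hsub : ∀ m : M, m - piN m ∈ C := by
    intro m
    have : m ∈ N ⊔ C := by rw [hNCtop]; trivial
    obtain ⟨y, hy, z, hz, hyz⟩ := AddSubgroup.mem_sup.mp this
    have hm : piN m = y := by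
      rw [← hyz, hpiN_add, hpiN_N y hy, hpiN_C z hz, add_zero]
    rw [hm, ← hyz]
    simpa using hz
  have hpiN_smul : ∀ (r : R) (m : M), piN (r • m) = r • piN m := by
    intro r m
    have hm : r • m = r • piN m + r • (m - piN m) := by
      rw [← gm.smul_add]
      congr 1
      abel
    rw [hm, hpiN_add, hpiN_N _ (hN.1 r _ (hpiN_mem m)),
      hpiN_C _ (hCsmul r _ (hsub m)), add_zero]
  -- components of elements of N stay in N
  have hNcomp : ∀ σ, ∀ n ∈ N, pi σ n ∈ N := by
    intro σ n hn
    have hn2 : n ∈ ⨆ τ : GArrow G, (N ⊓ gm.component τ) := by rw [← hN.2]; exact hn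
    refine AddSubgroup.iSup_induction _ hn2 (C := fun x => pi σ x ∈ N) ?_ ?_ ?_ <;> beta_reduce
    · rintro τ x ⟨hxN, hxτ⟩
      by_cases hστ : σ = τ
      · subst hστ; rw [hpi_same σ x hxτ]; exact hxN
      · rw [hpi_ne τ σ x hxτ hστ]; exact zero_mem N
    · rw [hpi_zero]; exact zero_mem N
    · intro x y hx hy
      rw [hpi_add]
      exact add_mem hx hy
  -- the graded projection q
  set f : ∀ σ : GArrow G, (A σ) →ₗ[ℤ] M := fun σ =>
    (AddMonoidHom.mk' (fun x : A σ => pi σ (piN (x : M)))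
      (by intro x y; simp only [Submodule.coe_add, hpiN_add, hpi_add])).toIntLinearMap
    with hfdef
  set q : M → M := fun m => DirectSum.toModule ℤ (GArrow G) M f (e.symm m) with hqdef
  have hq_add : ∀ x y, q (x + y) = q x + q y := by
    intro x y
    rw [hqdef]
    simp only [map_add]
  have hq_zero : q 0 = 0 := by rw [hqdef]; simp
  have hq_hom : ∀ σ, ∀ m ∈ gm.component σ, q m = pi σ (piN m) := by
    intro σ m hm
    rw [hqdef]
    simp only [he_of σ m hm, ← DirectSum.lof_eq_of ℤ, DirectSum.toModule_lof]
    rfl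
  have hq_compnt : ∀ σ, ∀ m ∈ gm.component σ, q m ∈ gm.component σ := by
    intro σ m hm
    rw [hq_hom σ m hm]
    exact hpi_mem σ _
  have top_ind : ∀ (m : M) (P : M → Prop), (∀ σ, ∀ x ∈ gm.component σ, P x) → P 0 →
      (∀ x y, P x → P y → P (x + y)) → P m := by
    intro m P h1 h2 h3
    have hm : m ∈ ⨆ σ : GArrow G, gm.component σ := by rw [gm.sup_eq_top]; trivial
    exact AddSubgroup.iSup_induction _ hm (C := P) h1 h2 h3
  have hq_memN : ∀ m, q m ∈ N := by
    intro m
    refine top_ind m (fun m => q m ∈ N) ?_ ?_ ?_ <;> beta_reduce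
    · intro σ x hx
      rw [hq_hom σ x hx]
      exact hNcomp σ _ (hpiN_mem x)
    · rw [hq_zero]; exact zero_mem N
    · intro x y hx hy
      rw [hq_add]
      exact add_mem hx hy
  have hq_N : ∀ n ∈ N, q n = n := by
    intro n hn
    have hn2 : n ∈ ⨆ τ : GArrow G, (N ⊓ gm.component τ) := by rw [← hN.2]; exact hn
    refine AddSubgroup.iSup_induction _ hn2 (C := fun x => q x = x) ?_ ?_ ?_ <;> beta_reduce
    · rintro τ x ⟨hxN, hxτ⟩
      rw [hq_hom τ x hxτ, hpiN_N x hxN, hpi_same τ x hxτ]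
    · exact hq_zero
    · intro x y hx hy
      rw [hq_add, hx, hy]
  -- the key degree-shift lemma
  have hpi_smul : ∀ (ρ σ : GArrow G) (hc : GArrow.Composable ρ σ), ∀ r ∈ gr.component ρ,
      ∀ x : M, pi (GArrow.comp ρ σ hc) (r • x) = r • pi σ x := by
    intro ρ σ hc r hr x
    refine top_ind x (fun x => pi (GArrow.comp ρ σ hc) (r • x) = r • pi σ x) ?_ ?_ ?_ <;> beta_reduce
    · intro τ y hy
      by_cases hcτ : GArrow.Composable ρ τ
      · have hmem : r • y ∈ gm.component (GArrow.comp ρ τ hcτ) := gm.smul_mem ρ τ hcτ r hr y hy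
        by_cases hτσ : τ = σ
        · subst hτσ
          rw [hpi_same _ _ hmem, hpi_same _ _ hy]
        · have hne : GArrow.comp ρ σ hc ≠ GArrow.comp ρ τ hcτ := by
            intro hcontra
            exact hτσ (comp_inj_right' ρ hcτ hc hcontra.symm)
          rw [hpi_ne _ _ _ hmem hne, hpi_ne τ σ y hy (fun hcontra => hτσ hcontra.symm),
            smul_zero' r]
      · have h0 : r • y = 0 := gm.smul_eq_zero ρ τ hcτ r hr y hy
        have hτσ : σ ≠ τ := fun hcontra => hcτ (hcontra ▸ hc)
        rw [h0, hpi_zero, hpi_ne τ σ y hy hτσ, smul_zero' r]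
    · rw [smul_zero' r, hpi_zero, hpi_zero, smul_zero' r]
    · intro a b ha hb
      rw [gm.smul_add, hpi_add, ha, hb, hpi_add, ← gm.smul_add]
  -- q is R-linear
  have hq_smul : ∀ (r : R) (m : M), q (r • m) = r • q m := by
    intro r m
    refine top_ind m (fun m => ∀ r : R, q (r • m) = r • q m) ?_ ?_ ?_ r <;> beta_reduce
    · intro σ x hx r
      have hr : r ∈ ⨆ ρ : GArrow G, gr.component ρ := by rw [gr.sup_eq_top]; trivial
      refine AddSubgroup.iSup_induction _ hr (C := fun r => q (r • x) = r • q x) ?_ ?_ ?_ <;> beta_reduce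
      · intro ρ s hs
        by_cases hc : GArrow.Composable ρ σ
        · have hmem : s • x ∈ gm.component (GArrow.comp ρ σ hc) := gm.smul_mem ρ σ hc s hs x hx
          rw [hq_hom _ _ hmem, hpiN_smul, hpi_smul ρ σ hc s hs, hq_hom σ x hx]
        · have h0 : s • x = 0 := gm.smul_eq_zero ρ σ hc s hs x hx
          have h0' : s • q x = 0 := gm.smul_eq_zero ρ σ hc s hs _ (hq_compnt σ x hx)
          rw [h0, hq_zero, h0']
      · rw [zero_smul' x, hq_zero, zero_smul']
      · intro s t hsq htq
        rw [gm.add_smul, hq_add, hsq, htq, gm.add_smul]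
    · intro r
      rw [smul_zero' r, hq_zero, smul_zero' r]
    · intro x y hx hy r
      rw [gm.smul_add, hq_add, hx r, hy r, hq_add, gm.smul_add]
  -- q commutes with the homogeneous projections
  have hqpi : ∀ τ (m : M), q (pi τ m) = pi τ (q m) := by
    intro τ m
    refine top_ind m (fun m => q (pi τ m) = pi τ (q m)) ?_ ?_ ?_ <;> beta_reduce
    · intro σ x hx
      by_cases hτσ : τ = σ
      · subst hτσ
        rw [hpi_same τ x hx, hpi_same τ _ (hq_compnt τ x hx)]
      · rw [hpi_ne σ τ x hx hτσ, hq_zero, hpi_ne σ τ _ (hq_compnt σ x hx) hτσ]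
    · rw [hpi_zero, hq_zero, hpi_zero]
    · intro x y hx hy
      rw [hpi_add, hq_add, hx, hy, hq_add, hpi_add]
  -- negation
  have hq_neg : ∀ m : M, q (-m) = - q m := by
    intro m
    have := hq_add m (-m)
    rw [add_neg_cancel, hq_zero] at this
    exact (neg_eq_of_add_eq_zero_right this.symm).symm
  -- the graded complement
  set Cg : AddSubgroup M := AddMonoidHom.ker (AddMonoidHom.mk' q hq_add) with hCgdef
  have hCg_mem : ∀ m : M, m ∈ Cg ↔ q m = 0 := fun m => Iff.rfl
  refine ⟨Cg, ⟨?_, ?_⟩, ?_, ?_⟩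
  · -- smul closed
    intro r m hm
    rw [hCg_mem] at hm ⊢
    rw [hq_smul, hm, smul_zero' r]
  · -- graded
    apply le_antisymm
    · intro m hm
      have hm0 : q m = 0 := (hCg_mem m).mp hm
      rw [← hsum m]
      refine AddSubgroup.sum_mem _ fun τ _ => ?_
      refine (le_iSup (fun σ => Cg ⊓ gm.component σ) τ : _) ⟨?_, hpi_mem τ m⟩
      show q (pi τ m) = 0
      rw [hqpi, hm0, hpi_zero]
    · refine iSup_le fun σ => ?_
      exact inf_le_left
  · -- N ⊓ Cg = ⊥
    rw [eq_bot_iff]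
    rintro m ⟨hmN, hmC⟩
    have hmC' : q m = 0 := hmC
    have := hq_N m hmN
    rw [hmC'] at this
    simpa using this.symm
  · -- N ⊔ Cg = ⊤
    rw [eq_top_iff]
    intro m _
    have h1 : q m ∈ N := hq_memN m
    have h2 : m - q m ∈ Cg := by
      rw [hCg_mem]
      have : q (m - q m) = q m - q (q m) := by
        rw [sub_eq_add_neg, hq_add, hq_neg, sub_eq_add_neg]
      rw [this, hq_N _ h1, sub_self]
    exact AddSubgroup.mem_sup.mpr ⟨q m, h1, m - q m, h2, by abel⟩
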